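/- For a composition I = (i₁,...,i_r) of n, the generating polynomial of the statistic (binomial(n,2) − inv(σ)) over all permutations σ of n with saillance composition I equals q^{maj(I)} · [n]_q! / ([i₁]_q [i₁+i₂]_q ⋯ [i₁+⋯+i_r]_q), where maj(I) is the sum of the partial sums i₁, i₁+i₂, ..., i₁+⋯+i_{r-1}. -/

import Mathlib

open scoped Classical

/-- A word is *initially dominated* if its first letter is strictly greater
than all subsequent letters. -/
def initiallyDominated (w : List ℕ) : Prop :=
  w ≠ [] ∧ ∀ a ∈ w.tail, a < w.head!

/-- Positions (0-indexed) of the left-to-right maxima of a word. -/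
def lrMaxPositions (w : List ℕ) : List ℕ :=
  (List.range w.length).filter (fun i => decide (∀ j < i, w[j]! < w[i]!))

/-- The saillance composition of a word: gaps between consecutive
left-to-right maxima positions. -/
def SC (w : List ℕ) : List ℕ :=
  List.zipWith (fun a b => a - b) ((lrMaxPositions w).tail ++ [w.length]) (lrMaxPositions w)

/-- The word (one-line notation, values in {1,…,n}) of a permutation of {1,…,n}. -/
def permWord {n : ℕ} (σ : Equiv.Perm (Fin n)) : List ℕ :=
  List.ofFn (fun i => (σ i : ℕ) + 1)

/-- The `q`-integer `[k]_q = 1 + q + ⋯ + q^{k-1}` as a polynomial in `q = X`. -/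
noncomputable def qInt (k : ℕ) : Polynomial ℤ := ∑ i ∈ Finset.range k, Polynomial.X ^ i

/-- The `q`-factorial `[n]_q! = [1]_q [2]_q ⋯ [n]_q`. -/
noncomputable def qFact (n : ℕ) : Polynomial ℤ := ∏ k ∈ Finset.range n, qInt (k + 1)

/-- The major index `maj(I) = i₁ + (i₁+i₂) + ⋯ + (i₁+⋯+i_{r-1})` of a composition. -/
def majC (I : List ℕ) : ℕ := ∑ k ∈ Finset.range (I.length - 1), (I.take (k + 1)).sum

/-- The number of inversions of a permutation. -/
def invPerm {n : ℕ} (σ : Equiv.Perm (Fin n)) : ℕ :=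
  (Finset.univ.filter (fun p : Fin n × Fin n => p.1 < p.2 ∧ σ p.2 < σ p.1)).card

open Finset

section Code

variable {n : ℕ}

/-- The coinversion table: number of positions `i < j` with `σ i < σ j`. -/
def codeF (σ : Equiv.Perm (Fin n)) (j : Fin n) : ℕ :=
  (Finset.univ.filter (fun i : Fin n => i < j ∧ σ i < σ j)).card

lemma codeF_le (σ : Equiv.Perm (Fin n)) (j : Fin n) : codeF σ j ≤ (j : ℕ) := by
  have h : (Finset.univ.filter (fun i : Fin n => i < j ∧ σ i < σ j)) ⊆ Finset.Iio j := by
    intro i hi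
    simp only [Finset.mem_filter] at hi
    exact Finset.mem_Iio.2 hi.2.1
  simpa [codeF, Fin.card_Iio] using Finset.card_le_card h

/-- `codeF` plus the number of later smaller values is the value itself. -/
lemma codeF_add (σ : Equiv.Perm (Fin n)) (j : Fin n) :
    codeF σ j + (Finset.univ.filter (fun i : Fin n => j < i ∧ σ i < σ j)).card = (σ j : ℕ) := by
  classical
  have hdisj : Disjoint (Finset.univ.filter (fun i : Fin n => i < j ∧ σ i < σ j))
      (Finset.univ.filter (fun i : Fin n => j < i ∧ σ i < σ j)) := by
    rw [Finset.disjoint_filter]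
    rintro i - ⟨h1, -⟩ ⟨h2, -⟩
    exact absurd (h1.trans h2) (lt_irrefl i)
  rw [codeF, ← Finset.card_union_of_disjoint hdisj]
  have hunion : (Finset.univ.filter (fun i : Fin n => i < j ∧ σ i < σ j)) ∪
      (Finset.univ.filter (fun i : Fin n => j < i ∧ σ i < σ j)) =
      Finset.univ.filter (fun i : Fin n => σ i < σ j) := by
    ext i
    simp only [Finset.mem_union, Finset.mem_filter, Finset.mem_univ, true_and]
    constructor
    · rintro (⟨-, h⟩ | ⟨-, h⟩) <;> exact h
    · intro h
      rcases lt_trichotomy i j with hij | rfl | hij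
      · exact Or.inl ⟨hij, h⟩
      · exact absurd h (lt_irrefl _)
      · exact Or.inr ⟨hij, h⟩
  rw [hunion]
  have : (Finset.univ.filter (fun i : Fin n => σ i < σ j)) =
      (Finset.Iio (σ j)).map σ.symm.toEmbedding := by
    ext i
    simp only [Finset.mem_filter, Finset.mem_univ, true_and, Finset.mem_map,
      Finset.mem_Iio, Equiv.coe_toEmbedding]
    constructor
    · intro h; exact ⟨σ i, h, σ.symm_apply_apply i⟩
    · rintro ⟨a, ha, rfl⟩; simpa using ha
  rw [this, Finset.card_map, Fin.card_Iio]

/-- Record (left-to-right maximum) predicate. -/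
def isRec (σ : Equiv.Perm (Fin n)) (j : Fin n) : Prop := ∀ i : Fin n, i < j → σ i < σ j

lemma isRec_iff_codeF (σ : Equiv.Perm (Fin n)) (j : Fin n) :
    isRec σ j ↔ codeF σ j = (j : ℕ) := by
  constructor
  · intro h
    have : (Finset.univ.filter (fun i : Fin n => i < j ∧ σ i < σ j)) = Finset.Iio j := by
      ext i
      simp only [Finset.mem_filter, Finset.mem_univ, true_and, Finset.mem_Iio]
      exact ⟨fun h => h.1, fun hi => ⟨hi, h i hi⟩⟩
    rw [codeF, this, Fin.card_Iio]
  · intro h i hi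
    simp only [codeF] at h
    have hsub : (Finset.univ.filter (fun i : Fin n => i < j ∧ σ i < σ j)) ⊆ Finset.Iio j := by
      intro i hi
      simp only [Finset.mem_filter] at hi
      exact Finset.mem_Iio.2 hi.2.1
    have hcard : (Finset.Iio j).card ≤
        (Finset.univ.filter (fun i : Fin n => i < j ∧ σ i < σ j)).card := by
      rw [Fin.card_Iio]; omega
    have := Finset.eq_of_subset_of_card_le hsub hcard
    have hmem : i ∈ Finset.univ.filter (fun i : Fin n => i < j ∧ σ i < σ j) := by
      rw [this]; exact Finset.mem_Iio.2 hi
    simp only [Finset.mem_filter] at hmem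
    exact hmem.2.2

/-- Generic fiberwise count of ordered pairs. -/
lemma card_pairs (P : Fin n → Fin n → Prop) [DecidablePred fun p : Fin n × Fin n => p.1 < p.2 ∧ P p.1 p.2]
    [∀ j, DecidablePred fun i : Fin n => i < j ∧ P i j] :
    (Finset.univ.filter (fun p : Fin n × Fin n => p.1 < p.2 ∧ P p.1 p.2)).card
      = ∑ j : Fin n, (Finset.univ.filter (fun i : Fin n => i < j ∧ P i j)).card := by
  classical
  rw [Finset.card_eq_sum_card_fiberwise (f := Prod.snd) (t := Finset.univ) (fun x _ => Finset.mem_univ _)]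
  refine Finset.sum_congr rfl fun j _ => ?_
  refine Finset.card_bij' (fun p _ => p.1) (fun i _ => (i, j)) ?_ ?_ ?_ ?_
  · intro p hp
    simp only [Finset.mem_filter, Finset.mem_univ, true_and] at hp ⊢
    obtain ⟨⟨h1, h2⟩, h3⟩ := hp
    subst h3
    exact ⟨h1, h2⟩
  · intro i hi
    simp only [Finset.mem_filter, Finset.mem_univ, true_and] at hi ⊢
    exact ⟨hi, trivial⟩
  · intro p hp
    simp only [Finset.mem_filter, Finset.mem_univ, true_and] at hp
    obtain ⟨-, h3⟩ := hp
    exact Prod.ext rfl h3.symm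
  · intro i _
    rfl

lemma inv_add_sum_codeF (σ : Equiv.Perm (Fin n)) :
    invPerm σ + ∑ j : Fin n, codeF σ j = n.choose 2 := by
  classical
  have h1 : invPerm σ = ∑ j : Fin n, (Finset.univ.filter (fun i : Fin n => i < j ∧ σ j < σ i)).card := by
    rw [invPerm]
    exact card_pairs (fun i j => σ j < σ i)
  have h3 : ∀ j : Fin n,
      (Finset.univ.filter (fun i : Fin n => i < j ∧ σ j < σ i)).card + codeF σ j = (j : ℕ) := by
    intro j
    rw [codeF, ← Finset.card_union_of_disjoint]
    · have : (Finset.univ.filter (fun i : Fin n => i < j ∧ σ j < σ i)) ∪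
          (Finset.univ.filter (fun i : Fin n => i < j ∧ σ i < σ j)) = Finset.Iio j := by
        ext i
        simp only [Finset.mem_union, Finset.mem_filter, Finset.mem_univ, true_and, Finset.mem_Iio]
        constructor
        · rintro (⟨h, -⟩ | ⟨h, -⟩) <;> exact h
        · intro hi
          have hne : σ i ≠ σ j := fun h => (lt_irrefl j) (by
            have := σ.injective h; exact this ▸ hi)
          rcases lt_or_gt_of_ne hne with h | h
          · exact Or.inr ⟨hi, h⟩
          · exact Or.inl ⟨hi, h⟩
      rw [this, Fin.card_Iio]
    · rw [Finset.disjoint_filter]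
      rintro i - ⟨-, h1⟩ ⟨-, h2⟩
      exact absurd (h1.trans h2) (lt_irrefl _)
  have h4 : ∑ j : Fin n, ((Finset.univ.filter (fun i : Fin n => i < j ∧ σ j < σ i)).card
      + codeF σ j) = ∑ j : Fin n, (j : ℕ) := Finset.sum_congr rfl fun j _ => h3 j
  rw [Finset.sum_add_distrib] at h4
  have h5 : ∑ j : Fin n, (j : ℕ) = n.choose 2 := by
    rw [Fin.sum_univ_eq_sum_range (fun j => j) n, Finset.sum_range_id n, Nat.choose_two_right]
  omega

lemma choose_sub_inv (σ : Equiv.Perm (Fin n)) :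
    n.choose 2 - invPerm σ = ∑ j : Fin n, codeF σ j := by
  have := inv_add_sum_codeF σ
  omega

/-- The code as an element of the product of `Fin (j+1)`. -/
def codeE (σ : Equiv.Perm (Fin n)) : (j : Fin n) → Fin ((j : ℕ) + 1) :=
  fun j => ⟨codeF σ j, Nat.lt_succ_of_le (codeF_le σ j)⟩

lemma codeE_injective : Function.Injective (codeE (n := n)) := by
  intro σ τ h
  have hcode : ∀ j : Fin n, codeF σ j = codeF τ j := by
    intro j
    have := congrFun h j
    simpa [codeE, Fin.ext_iff] using this
  -- key step: downward induction
  have key : ∀ m : ℕ, ∀ j : Fin n, n - (j : ℕ) ≤ m → σ j = τ j := by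
    intro m
    induction m with
    | zero => intro j hj; exact absurd hj (by omega)
    | succ m ih =>
      intro j hj
      have htail : ∀ i : Fin n, j < i → σ i = τ i := by
        intro i hi
        exact ih i (by have := i.isLt; have := j.isLt; have : (j:ℕ) < (i:ℕ) := hi; omega)
      -- symmetric claim
      have claim : ∀ (σ τ : Equiv.Perm (Fin n)), codeF σ j = codeF τ j →
          (∀ i : Fin n, j < i → σ i = τ i) → (σ j : ℕ) ≤ (τ j : ℕ) → (σ j : ℕ) = (τ j : ℕ) := by
        intro σ τ hc ht hle
        by_contra hne
        have hlt : (σ j : ℕ) < (τ j : ℕ) := lt_of_le_of_ne hle hne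
        set A := Finset.univ.filter (fun i : Fin n => j < i ∧ σ i < σ j) with hA
        set B := Finset.univ.filter (fun i : Fin n => j < i ∧ σ i < τ j) with hB
        have hBτ : B = Finset.univ.filter (fun i : Fin n => j < i ∧ τ i < τ j) := by
          ext i
          simp only [hB, Finset.mem_filter, Finset.mem_univ, true_and]
          constructor
          · rintro ⟨h1, h2⟩; exact ⟨h1, by rw [← ht i h1]; exact h2⟩
          · rintro ⟨h1, h2⟩; exact ⟨h1, by rw [ht i h1]; exact h2⟩
        have hAB : A ⊆ B := by
          intro i hi
          simp only [hA, hB, Finset.mem_filter, Finset.mem_univ, true_and] at hi ⊢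
          exact ⟨hi.1, lt_of_lt_of_le hi.2 (by exact_mod_cast hle)⟩
        have h1 : codeF σ j + A.card = (σ j : ℕ) := codeF_add σ j
        have h2 : codeF τ j + B.card = (τ j : ℕ) := by
          have := codeF_add τ j
          rw [hBτ]; exact this
        -- B \ A injects into Ioo (σ j) (τ j)
        have hD : (B \ A).card ≤ (Finset.Ioo (σ j) (τ j)).card := by
          apply Finset.card_le_card_of_injOn σ
          · intro i hi
            simp only [hA, hB, Finset.mem_coe, Finset.mem_sdiff, Finset.mem_filter, Finset.mem_univ, true_and] at hi
            obtain ⟨⟨hji, hiτ⟩, hnot⟩ := hi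
            have hge : σ j ≤ σ i := by
              by_contra hcon
              exact hnot ⟨hji, lt_of_not_ge hcon⟩
            have hne2 : σ i ≠ σ j := fun h => (lt_irrefl j) (σ.injective h ▸ hji)
            exact Finset.mem_Ioo.2 ⟨lt_of_le_of_ne hge (Ne.symm hne2), hiτ⟩
          · intro a _ b _ hab
            exact σ.injective hab
        have hIoo : (Finset.Ioo (σ j) (τ j)).card = (τ j : ℕ) - (σ j : ℕ) - 1 := Fin.card_Ioo _ _
        have hsd : (B \ A).card = B.card - A.card := Finset.card_sdiff_of_subset hAB
        have hABle : A.card ≤ B.card := Finset.card_le_card hAB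
        omega
      rcases le_total ((σ j : ℕ)) ((τ j : ℕ)) with hle | hle
      · exact Fin.ext (claim σ τ (hcode j) htail hle)
      · exact (Fin.ext (claim τ σ (hcode j).symm (fun i hi => (htail i hi).symm) hle)).symm
  exact Equiv.ext fun j => key n j (by omega)

lemma codeE_bijective : Function.Bijective (codeE (n := n)) := by
  rw [Fintype.bijective_iff_injective_and_card]
  refine ⟨codeE_injective, ?_⟩
  rw [Fintype.card_perm, Fintype.card_pi]
  simp only [Fintype.card_fin]
  rw [Fin.prod_univ_eq_prod_range (fun j => j + 1) n, Finset.prod_range_add_one_eq_factorial]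

end Code

section Lists

/-- Partial sums `0, i₁, i₁+i₂, …` (length = length of `I`). -/
def PSfull (I : List ℕ) : List ℕ := (List.range I.length).map (fun k => (I.take k).sum)

lemma PSfull_nil : PSfull [] = [] := rfl

lemma PSfull_cons (i : ℕ) (J : List ℕ) :
    PSfull (i :: J) = 0 :: (PSfull J).map (fun x => i + x) := by
  simp [PSfull, List.range_succ_eq_map, List.map_map, Function.comp_def]

lemma zipWith_self' {α β : Type*} (f : α → α → β) : ∀ l : List α,
    List.zipWith f l l = l.map (fun a => f a a)
  | [] => rfl
  | a :: l => by simp [zipWith_self' f l]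

lemma recover (n : ℕ) : ∀ (L : List ℕ) (a : ℕ), (a :: L).Pairwise (· < ·) →
    (∀ x ∈ a :: L, x < n) →
    a :: L = (PSfull (List.zipWith (fun x y => x - y) (L ++ [n]) (a :: L))).map (fun x => a + x) := by
  intro L
  induction L with
  | nil =>
    intro a _ hlt
    simp [PSfull, List.range_succ]
  | cons b L' ih =>
    intro a hsort hlt
    have hab : a < b := (List.pairwise_cons.1 hsort).1 b (List.mem_cons_self)
    have h1 : (b :: L').Pairwise (· < ·) := (List.pairwise_cons.1 hsort).2
    have h2 : ∀ x ∈ b :: L', x < n := fun x hx => hlt x (List.mem_cons_of_mem _ hx)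
    have hz : List.zipWith (fun x y => x - y) ((b :: L') ++ [n]) (a :: b :: L')
        = (b - a) :: List.zipWith (fun x y => x - y) (L' ++ [n]) (b :: L') := rfl
    rw [hz, PSfull_cons, List.map_cons, List.map_map]
    have hfun : ((fun x => a + x) ∘ (fun x => b - a + x)) = (fun x => b + x) := by
      funext x; simp only [Function.comp_apply]; omega
    rw [hfun, ← ih b h1 h2]
    simp

lemma sorted_filter_range_eq (n : ℕ) (P : List ℕ) (hs : P.Pairwise (· < ·))
    (hlt : ∀ x ∈ P, x < n) :
    (List.range n).filter (fun j => decide (j ∈ P)) = P := by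
  have hnd1 : ((List.range n).filter (fun j => decide (j ∈ P))).Nodup :=
    List.nodup_range.filter _
  have hnd2 : P.Nodup := hs.nodup
  have hmem : ∀ x, x ∈ (List.range n).filter (fun j => decide (j ∈ P)) ↔ x ∈ P := by
    intro x
    simp only [List.mem_filter, List.mem_range, decide_eq_true_eq]
    exact ⟨fun h => h.2, fun h => ⟨hlt x h, h⟩⟩
  have hperm : List.Perm ((List.range n).filter (fun j => decide (j ∈ P))) P :=
    List.perm_of_nodup_nodup_toFinset_eq hnd1 hnd2
      (by ext x; simp only [List.mem_toFinset]; exact hmem x)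
  have hs1 : ((List.range n).filter (fun j => decide (j ∈ P))).Pairwise (· < ·) :=
    List.pairwise_lt_range.filter _
  exact List.Perm.eq_of_pairwise (fun a b _ _ h h' => absurd h (not_lt.2 h'.le)) hs1 hs hperm

end Lists

section Words

variable {n : ℕ}

lemma length_permWord (σ : Equiv.Perm (Fin n)) : (permWord σ).length = n := by
  simp [permWord]

lemma get!_permWord (σ : Equiv.Perm (Fin n)) (j : ℕ) (h : j < n) :
    (permWord σ)[j]! = (σ ⟨j, h⟩ : ℕ) + 1 := by
  rw [getElem!_pos _ _ (by rw [length_permWord]; exact h)]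
  simp [permWord]

lemma pred_iff_isRec (σ : Equiv.Perm (Fin n)) (x : ℕ) (hx : x < n) :
    (∀ j < x, (permWord σ)[j]! < (permWord σ)[x]!) ↔ isRec σ ⟨x, hx⟩ := by
  constructor
  · intro h i hi
    have := h (i : ℕ) hi
    rw [get!_permWord σ i (lt_trans hi hx), get!_permWord σ x hx] at this
    simpa using this
  · intro h j hj
    rw [get!_permWord σ j (lt_trans hj hx), get!_permWord σ x hx]
    have := h ⟨j, lt_trans hj hx⟩ hj
    simpa using this

lemma mem_lrMax_iff (σ : Equiv.Perm (Fin n)) (x : ℕ) :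
    x ∈ lrMaxPositions (permWord σ) ↔ ∃ h : x < n, isRec σ ⟨x, h⟩ := by
  rw [lrMaxPositions, List.mem_filter, List.mem_range, length_permWord]
  constructor
  · rintro ⟨h1, h2⟩
    rw [decide_eq_true_eq] at h2
    exact ⟨h1, (pred_iff_isRec σ x h1).1 h2⟩
  · rintro ⟨h1, h2⟩
    exact ⟨h1, by rw [decide_eq_true_eq]; exact (pred_iff_isRec σ x h1).2 h2⟩

lemma lrMax_sorted (σ : Equiv.Perm (Fin n)) : (lrMaxPositions (permWord σ)).Pairwise (· < ·) := by
  rw [lrMaxPositions]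
  exact List.pairwise_lt_range.filter _

lemma lrMax_lt (σ : Equiv.Perm (Fin n)) : ∀ x ∈ lrMaxPositions (permWord σ), x < n := by
  intro x hx
  rw [lrMaxPositions, List.mem_filter, List.mem_range, length_permWord] at hx
  exact hx.1

lemma zero_mem_lrMax (σ : Equiv.Perm (Fin n)) (hn : 0 < n) :
    0 ∈ lrMaxPositions (permWord σ) := by
  rw [mem_lrMax_iff]
  exact ⟨hn, fun i hi => absurd hi (by simp [Fin.lt_def])⟩

end Words

section Fiber

variable {n : ℕ}

lemma take_sum_lt (I : List ℕ) (hpos : ∀ i ∈ I, 0 < i) :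
    ∀ l k, k < l → l ≤ I.length → (I.take k).sum < (I.take l).sum := by
  intro l
  induction l with
  | zero => intro k hk; omega
  | succ l' ih =>
    intro k hk hl
    have hstep : (I.take l').sum < (I.take (l' + 1)).sum := by
      have hlen : l' < I.length := by omega
      rw [List.sum_take_succ I l' hlen]
      have := hpos (I[l']'hlen) (List.getElem_mem hlen)
      omega
    rcases Nat.lt_succ_iff_lt_or_eq.1 hk with h | h
    · exact lt_trans (ih k h (by omega)) hstep
    · rw [h]; exact hstep

lemma PSfull_mem_lt (I : List ℕ) (hpos : ∀ i ∈ I, 0 < i) (x : ℕ) (hx : x ∈ PSfull I) :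
    x < I.sum := by
  rw [PSfull, List.mem_map] at hx
  obtain ⟨k, hk, rfl⟩ := hx
  rw [List.mem_range] at hk
  have := take_sum_lt I hpos I.length k hk le_rfl
  rwa [List.take_length] at this

lemma PSfull_sorted (I : List ℕ) (hpos : ∀ i ∈ I, 0 < i) : (PSfull I).Pairwise (· < ·) := by
  rw [PSfull, List.pairwise_map]
  refine (List.Pairwise.and_mem.1 (List.pairwise_lt_range (n := I.length))).imp ?_
  rintro a b ⟨ha, hb, hab⟩
  rw [List.mem_range] at ha hb
  exact take_sum_lt I hpos b a hab hb.le

lemma SC_of_PS (I : List ℕ) (hne : I ≠ []) :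
    List.zipWith (fun x y => x - y) ((PSfull I).tail ++ [I.sum]) (PSfull I) = I := by
  obtain ⟨r', hr⟩ : ∃ r', I.length = r' + 1 := by
    cases I with
    | nil => exact absurd rfl hne
    | cons a l => exact ⟨l.length, rfl⟩
  have e1 : (PSfull I).tail = (List.range r').map (fun k => (I.take (k + 1)).sum) := by
    rw [PSfull, hr, List.range_succ_eq_map, List.map_cons, List.tail_cons, List.map_map]
    rfl
  have htail : (PSfull I).tail ++ [I.sum] =
      (List.range I.length).map (fun k => (I.take (k + 1)).sum) := by
    have e2 : (List.range I.length).map (fun k => (I.take (k + 1)).sum)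
        = (List.range r').map (fun k => (I.take (k + 1)).sum) ++ [(I.take (r' + 1)).sum] := by
      rw [hr, List.range_succ, List.map_append]
      rfl
    rw [e1, e2]
    congr 2
    rw [← hr, List.take_length]
  rw [htail, PSfull, List.zipWith_map_left, List.zipWith_map_right, zipWith_self']
  apply List.ext_getElem
  · simp [hr]
  · intro k h1 h2
    simp only [List.getElem_map, List.getElem_range]
    have hk : k < I.length := by simpa using h2
    rw [List.sum_take_succ I k hk]
    simp [List.get_eq_getElem]

lemma fiber_iff (σ : Equiv.Perm (Fin n)) (I : List ℕ) (hpos : ∀ i ∈ I, 0 < i)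
    (hsum : I.sum = n) (hn : 0 < n) :
    SC (permWord σ) = I ↔ lrMaxPositions (permWord σ) = PSfull I := by
  have hne : I ≠ [] := by
    intro h; rw [h] at hsum; simp at hsum; omega
  constructor
  · intro h
    cases hL : lrMaxPositions (permWord σ) with
    | nil =>
      exact absurd (zero_mem_lrMax σ hn) (by rw [hL]; simp)
    | cons c T =>
      have hsort : (c :: T).Pairwise (· < ·) := by rw [← hL]; exact lrMax_sorted σ
      have hltn : ∀ x ∈ c :: T, x < n := by rw [← hL]; exact lrMax_lt σ
      have hc : c = 0 := by
        have h0 : (0 : ℕ) ∈ c :: T := by rw [← hL]; exact zero_mem_lrMax σ hn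
        rcases List.mem_cons.1 h0 with h | h
        · exact h.symm
        · have := (List.pairwise_cons.1 hsort).1 0 h
          omega
      subst hc
      have hrec := recover n T 0 hsort hltn
      have hSC : List.zipWith (fun x y => x - y) (T ++ [n]) (0 :: T) = I := by
        rw [← h, SC, hL, length_permWord, List.tail_cons]
      rw [hSC] at hrec
      rw [hrec]
      simp
  · intro h
    rw [SC, h, length_permWord, ← hsum]
    exact SC_of_PS I hne

lemma fiber_iff2 (σ : Equiv.Perm (Fin n)) (I : List ℕ) (hpos : ∀ i ∈ I, 0 < i)
    (hsum : I.sum = n) (hn : 0 < n) :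
    SC (permWord σ) = I ↔ ∀ j : Fin n, (isRec σ j ↔ ((j : ℕ) ∈ PSfull I)) := by
  rw [fiber_iff σ I hpos hsum hn]
  constructor
  · intro h j
    rw [← h, mem_lrMax_iff]
    constructor
    · intro hr; exact ⟨j.isLt, by simpa using hr⟩
    · rintro ⟨h1, h2⟩; simpa using h2
  · intro h
    have h1 : lrMaxPositions (permWord σ) =
        (List.range n).filter (fun j => decide (j ∈ PSfull I)) := by
      rw [lrMaxPositions, length_permWord]
      apply List.filter_congr
      intro x hx
      rw [List.mem_range] at hx
      rw [decide_eq_decide]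
      rw [pred_iff_isRec σ x hx]
      exact h ⟨x, hx⟩
    rw [h1]
    exact sorted_filter_range_eq n (PSfull I) (PSfull_sorted I hpos)
      (fun x hx => hsum ▸ PSfull_mem_lt I hpos x hx)

end Fiber

lemma list_range_map_sum (r : ℕ) (f : ℕ → ℕ) :
    ((List.range r).map f).sum = ∑ k ∈ Finset.range r, f k := by
  induction r with
  | zero => simp
  | succ r ih => simp [List.range_succ, Finset.sum_range_succ, ih]

/-- The generating polynomial of `C(n,2) − inv(σ)` over permutations with
saillance composition `I` equals
`q^{maj(I)} [n]_q! / ([i₁]_q [i₁+i₂]_q ⋯ [i₁+⋯+i_r]_q)`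
(stated in denominator-cleared form). -/
theorem stmt3 (n : ℕ) (I : List ℕ) (hpos : ∀ i ∈ I, 0 < i) (hsum : I.sum = n) :
    (∑ σ ∈ Finset.univ.filter (fun σ : Equiv.Perm (Fin n) => SC (permWord σ) = I),
        (Polynomial.X : Polynomial ℤ) ^ (n.choose 2 - invPerm σ)) *
      ∏ k ∈ Finset.range I.length, qInt ((I.take (k + 1)).sum)
    = Polynomial.X ^ majC I * qFact n := by
  classical
  rcases Nat.eq_zero_or_pos n with hn | hn
  · -- degenerate case n = 0
    subst hn
    have hI : I = [] := by
      cases I with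
      | nil => rfl
      | cons a l =>
        have := hpos a (List.mem_cons_self)
        simp only [List.sum_cons] at hsum
        omega
    subst hI
    have hfil : (Finset.univ.filter (fun σ : Equiv.Perm (Fin 0) => SC (permWord σ) = [])) =
        Finset.univ := by
      apply Finset.filter_true_of_mem
      intro σ _
      have hw : permWord σ = [] := by simp [permWord]
      simp [SC, lrMaxPositions, hw]
    rw [hfil]
    simp [majC, qFact, invPerm]
  -- main case
  have hne : I ≠ [] := by
    intro h; rw [h] at hsum; simp at hsum; omega
  have hr : 0 < I.length := List.length_pos_iff.2 hne
  set t : (j : Fin n) → Finset (Fin ((j : ℕ) + 1)) :=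
    fun j => Finset.univ.filter (fun x => (((x : ℕ) = (j : ℕ)) ↔ ((j : ℕ) ∈ PSfull I))) with ht
  -- Step 1: transport the sum along the code bijection
  have step1 : (∑ σ ∈ Finset.univ.filter (fun σ : Equiv.Perm (Fin n) => SC (permWord σ) = I),
        (Polynomial.X : Polynomial ℤ) ^ (n.choose 2 - invPerm σ))
      = ∑ c ∈ Fintype.piFinset t, ∏ j : Fin n, (Polynomial.X : Polynomial ℤ) ^ ((c j : ℕ)) := by
    refine Finset.sum_bij (fun σ _ => codeE σ) ?_ ?_ ?_ ?_
    · intro σ hσ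
      rw [Finset.mem_filter] at hσ
      rw [Fintype.mem_piFinset]
      intro j
      simp only [ht, Finset.mem_filter]
      refine ⟨Finset.mem_univ _, ?_⟩
      have hrec := (fiber_iff2 σ I hpos hsum hn).1 hσ.2 j
      rw [isRec_iff_codeF] at hrec
      exact hrec
    · intro a ha b hb hab
      exact codeE_injective hab
    · intro c hc
      obtain ⟨σ, hσ⟩ := codeE_bijective.surjective c
      refine ⟨σ, ?_, hσ⟩
      rw [Finset.mem_filter]
      refine ⟨Finset.mem_univ _, ?_⟩
      rw [fiber_iff2 σ I hpos hsum hn]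
      intro j
      rw [isRec_iff_codeF]
      rw [Fintype.mem_piFinset] at hc
      have hcj := hc j
      simp only [ht, Finset.mem_filter] at hcj
      rw [← hσ] at hcj
      exact hcj.2
    · intro σ hσ
      rw [choose_sub_inv σ, ← Finset.prod_pow_eq_pow_sum]
      rfl
  -- Step 2: factor the sum over the product set
  have step2 : (∑ c ∈ Fintype.piFinset t, ∏ j : Fin n, (Polynomial.X : Polynomial ℤ) ^ ((c j : ℕ)))
      = ∏ j : Fin n, ∑ x ∈ t j, (Polynomial.X : Polynomial ℤ) ^ ((x : ℕ)) :=
    (Finset.prod_univ_sum t fun j x => (Polynomial.X : Polynomial ℤ) ^ ((x : ℕ))).symm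
  -- Step 3: evaluate each factor
  have step3 : ∀ j : Fin n, (∑ x ∈ t j, (Polynomial.X : Polynomial ℤ) ^ ((x : ℕ)))
      = if (j : ℕ) ∈ PSfull I then Polynomial.X ^ ((j : ℕ)) else qInt (j : ℕ) := by
    intro j
    by_cases hj : (j : ℕ) ∈ PSfull I
    · rw [if_pos hj]
      have hsing : t j = {(⟨(j : ℕ), Nat.lt_succ_self _⟩ : Fin ((j : ℕ) + 1))} := by
        ext x
        simp [ht, hj, Fin.ext_iff]
      rw [hsing, Finset.sum_singleton]
    · rw [if_neg hj]
      have htj : t j = Finset.univ.filter (fun x : Fin ((j : ℕ) + 1) => ¬ ((x : ℕ) = (j : ℕ))) := by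
        ext x
        simp [ht, hj]
      have hsplit := Finset.sum_filter_add_sum_filter_not (Finset.univ : Finset (Fin ((j : ℕ) + 1)))
        (fun x => (x : ℕ) = (j : ℕ)) (fun x => (Polynomial.X : Polynomial ℤ) ^ ((x : ℕ)))
      have h1 : (Finset.univ.filter (fun x : Fin ((j : ℕ) + 1) => (x : ℕ) = (j : ℕ)))
          = {(⟨(j : ℕ), Nat.lt_succ_self _⟩ : Fin ((j : ℕ) + 1))} := by
        ext x
        simp [Fin.ext_iff]
      have h2 : ∑ x : Fin ((j : ℕ) + 1), (Polynomial.X : Polynomial ℤ) ^ ((x : ℕ))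
          = qInt ((j : ℕ) + 1) := by
        rw [qInt]
        exact Fin.sum_univ_eq_sum_range (fun i => (Polynomial.X : Polynomial ℤ) ^ i) _
      rw [h1, Finset.sum_singleton, h2, qInt, Finset.sum_range_succ, ← qInt] at hsplit
      have h3 : (((⟨(j : ℕ), Nat.lt_succ_self _⟩ : Fin ((j : ℕ) + 1))) : ℕ) = (j : ℕ) := rfl
      rw [h3, add_comm (Polynomial.X ^ ((j : ℕ)))] at hsplit
      have hcanc := add_right_cancel hsplit
      rw [htj, hcanc]
  have hPSmem : ∀ x, x ∈ PSfull I ↔ ∃ k < I.length, (I.take k).sum = x := by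
    intro x
    rw [PSfull, List.mem_map]
    constructor
    · rintro ⟨k, hk, rfl⟩; exact ⟨k, List.mem_range.1 hk, rfl⟩
    · rintro ⟨k, hk, rfl⟩; exact ⟨k, List.mem_range.2 hk, rfl⟩
  -- Step 4/5: the product over Fin n
  have step4 : (∏ j : Fin n, (if (j : ℕ) ∈ PSfull I then (Polynomial.X : Polynomial ℤ) ^ ((j : ℕ))
        else qInt (j : ℕ)))
      = Polynomial.X ^ majC I *
        ∏ j ∈ (Finset.range n).filter (fun j => j ∉ PSfull I), qInt j := by
    rw [Fin.prod_univ_eq_prod_range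
      (fun j => if j ∈ PSfull I then (Polynomial.X : Polynomial ℤ) ^ j else qInt j) n]
    rw [Finset.prod_ite (fun j => (Polynomial.X : Polynomial ℤ) ^ j) (fun j => qInt j)]
    congr 1
    rw [Finset.prod_pow_eq_pow_sum]
    congr 1
    -- exponent is majC I
    have hset : (Finset.range n).filter (fun j => j ∈ PSfull I) = (PSfull I).toFinset := by
      ext x
      simp only [Finset.mem_filter, Finset.mem_range, List.mem_toFinset]
      exact ⟨fun h => h.2, fun h => ⟨hsum ▸ PSfull_mem_lt I hpos x h, h⟩⟩
    rw [hset]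
    have hnd : (PSfull I).Nodup := (PSfull_sorted I hpos).nodup
    have hsf := List.sum_toFinset (fun x => x) hnd
    simp only [List.map_id, List.map_id'] at hsf
    rw [hsf, PSfull, list_range_map_sum, majC]
    obtain ⟨r', hr'⟩ : ∃ r', I.length = r' + 1 := ⟨I.length - 1, by omega⟩
    rw [hr', Finset.sum_range_succ']
    simp
  -- Step 6: the q-factorial identity
  have hgn : (I.take (I.length - 1 + 1)).sum = n := by
    rw [show I.length - 1 + 1 = I.length by omega, List.take_length, hsum]
  have hg1 : ∀ k, k < I.length → 1 ≤ (I.take (k + 1)).sum ∧ (I.take (k + 1)).sum ≤ n := by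
    intro k hk
    have h0 : (I.take 0).sum < (I.take (k + 1)).sum :=
      take_sum_lt I hpos (k + 1) 0 (by omega) (by omega)
    simp only [List.take_zero, List.sum_nil] at h0
    have h2 := List.sum_take_add_sum_drop I (k + 1)
    omega
  have hgmono : ∀ k l, k < l → l < I.length → (I.take (k + 1)).sum < (I.take (l + 1)).sum := by
    intro k l hkl hlr
    exact take_sum_lt I hpos (l + 1) (k + 1) (by omega) (by omega)
  set S' : Finset ℕ := (Finset.range I.length).image (fun k => (I.take (k + 1)).sum) with hS'
  have hprodim : ∏ j ∈ S', qInt j = ∏ k ∈ Finset.range I.length, qInt ((I.take (k + 1)).sum) := by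
    rw [hS']
    refine Finset.prod_image ?_
    intro a ha b hb hab
    rw [Finset.mem_coe, Finset.mem_range] at ha hb
    by_contra hne2
    rcases Nat.lt_or_ge a b with h | h
    · exact absurd hab (Nat.ne_of_lt (hgmono a b h hb))
    · exact absurd hab.symm (Nat.ne_of_lt (hgmono b a (by omega) ha))
  have hS'sub : S' ⊆ Finset.Ico 1 (n + 1) := by
    intro x hx
    rw [hS', Finset.mem_image] at hx
    obtain ⟨k, hk, rfl⟩ := hx
    rw [Finset.mem_range] at hk
    have := hg1 k hk
    rw [Finset.mem_Ico]
    omega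
  have hsdiff : (Finset.range n).filter (fun j => j ∉ PSfull I) = Finset.Ico 1 (n + 1) \ S' := by
    ext j
    simp only [Finset.mem_filter, Finset.mem_range, Finset.mem_sdiff, Finset.mem_Ico]
    constructor
    · rintro ⟨hjn, hjP⟩
      rw [hPSmem] at hjP
      push_neg at hjP
      refine ⟨⟨?_, by omega⟩, ?_⟩
      · rcases Nat.eq_zero_or_pos j with h0 | h0
        · exfalso
          apply hjP 0 hr
          simp [h0]
        · exact h0
      · intro hjS'
        rw [hS', Finset.mem_image] at hjS'
        obtain ⟨k, hk, hkj⟩ := hjS'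
        rw [Finset.mem_range] at hk
        rcases Nat.lt_or_ge (k + 1) I.length with h | h
        · exact hjP (k + 1) h hkj
        · have hkeq : k = I.length - 1 := by omega
          subst hkeq
          rw [hgn] at hkj
          omega
    · rintro ⟨⟨hj1, hjn1⟩, hjS⟩
      have hjn : j < n := by
        rcases Nat.lt_or_ge j n with h | h
        · exact h
        · exfalso
          apply hjS
          rw [hS', Finset.mem_image]
          exact ⟨I.length - 1, Finset.mem_range.2 (by omega), by rw [hgn]; omega⟩
      refine ⟨hjn, ?_⟩
      rw [hPSmem]
      push_neg
      intro k hk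
      cases k with
      | zero => simp; omega
      | succ m =>
        intro hcon
        apply hjS
        rw [hS', Finset.mem_image]
        exact ⟨m, Finset.mem_range.2 (by omega), hcon⟩
  have hqfact : qFact n = ∏ j ∈ Finset.Ico 1 (n + 1), qInt j := by
    rw [qFact, Finset.prod_Ico_eq_prod_range]
    simp only [Nat.add_sub_cancel]
    exact Finset.prod_congr rfl fun k _ => by rw [Nat.add_comm]
  -- assemble
  rw [step1, step2]
  rw [Finset.prod_congr rfl (fun j _ => step3 j), step4]
  rw [mul_assoc]
  congr 1
  rw [hsdiff, hqfact, ← hprodim]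
  exact Finset.prod_sdiff hS'sub
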